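/- Let p be a positive n-dimensional real vector and M a non-negative n×n matrix that is q-approximately symmetric (i.e., M i j ≤ q · M j i for all i, j, with q ≥ 0) and satisfies (M·p) i ≤ p i for every index i. Then the sum of all entries of M is at most (q+1)·n. -/

import Mathlib

/-- Lemma (nearly-symmetric matrices): if `p` is positive, `M` is nonnegative,
`q`-approximately symmetric and `M·p ≤ p` entrywise, then the sum of all entries
of `M` is at most `(q+1)·n`. -/
theorem sum_entries_of_approx_symm (n : ℕ) (M : Matrix (Fin n) (Fin n) ℝ)
    (p : Fin n → ℝ) (hp : ∀ i, 0 < p i)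
    (hM : ∀ i j, 0 ≤ M i j) (q : ℝ) (hq : 0 ≤ q)
    (hsymm : ∀ i j, M i j ≤ q * M j i)
    (hMp : ∀ i, ∑ j, M i j * p j ≤ p i) :
    ∑ i, ∑ j, M i j ≤ (q + 1) * n := by
  classical
  have key : ∀ i, ∑ j ∈ Finset.univ.filter (fun j => p i ≤ p j), M i j ≤ 1 := by
    intro i
    rw [← mul_le_mul_iff_left₀ (hp i)]
    calc (∑ j ∈ Finset.univ.filter (fun j => p i ≤ p j), M i j) * p i
        = ∑ j ∈ Finset.univ.filter (fun j => p i ≤ p j), M i j * p i := by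
          rw [Finset.sum_mul]
      _ ≤ ∑ j ∈ Finset.univ.filter (fun j => p i ≤ p j), M i j * p j :=
          Finset.sum_le_sum fun j hj =>
            mul_le_mul_of_nonneg_left (Finset.mem_filter.mp hj).2 (hM i j)
      _ ≤ ∑ j, M i j * p j :=
          Finset.sum_le_sum_of_subset_of_nonneg (Finset.filter_subset _ _)
            (fun j _ _ => mul_nonneg (hM i j) (hp j).le)
      _ ≤ p i := hMp i
      _ = 1 * p i := (one_mul _).symm
  have split : ∀ i, ∑ j, M i j =
      (∑ j ∈ Finset.univ.filter (fun j => p i ≤ p j), M i j)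
      + ∑ j ∈ Finset.univ.filter (fun j => ¬ p i ≤ p j), M i j := by
    intro i
    exact (Finset.sum_filter_add_sum_filter_not _ _ _).symm
  calc ∑ i, ∑ j, M i j
      = ∑ i, ((∑ j ∈ Finset.univ.filter (fun j => p i ≤ p j), M i j)
          + ∑ j ∈ Finset.univ.filter (fun j => ¬ p i ≤ p j), M i j) := by
        exact Finset.sum_congr rfl fun i _ => split i
    _ = (∑ i, ∑ j ∈ Finset.univ.filter (fun j => p i ≤ p j), M i j)
        + ∑ i, ∑ j ∈ Finset.univ.filter (fun j => ¬ p i ≤ p j), M i j :=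
        Finset.sum_add_distrib
    _ ≤ (∑ i : Fin n, (1 : ℝ))
        + ∑ i, ∑ j ∈ Finset.univ.filter (fun j => ¬ p i ≤ p j), q * M j i := by
        gcongr with i _ i _ j hj
        · exact key i
        · exact hsymm i j
    _ = n + q * ∑ i, ∑ j ∈ Finset.univ.filter (fun j => ¬ p i ≤ p j), M j i := by
        rw [Finset.sum_const, Finset.card_univ, Fintype.card_fin, nsmul_eq_mul,
          mul_one, Finset.mul_sum]
        congr 1
        exact Finset.sum_congr rfl fun i _ => (Finset.mul_sum _ _ _).symm
    _ ≤ n + q * n := by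
        refine add_le_add_right (mul_le_mul_of_nonneg_left ?_ hq) _
        have hswap : ∑ i, ∑ j ∈ Finset.univ.filter (fun j => ¬ p i ≤ p j), M j i
            = ∑ j, ∑ i ∈ Finset.univ.filter (fun i => ¬ p i ≤ p j), M j i := by
          rw [Finset.sum_comm']
          simp [Finset.mem_filter]
        rw [hswap]
        calc ∑ j, ∑ i ∈ Finset.univ.filter (fun i => ¬ p i ≤ p j), M j i
            ≤ ∑ j : Fin n, (1:ℝ) := by
              refine Finset.sum_le_sum fun j _ => ?_
              refine le_trans ?_ (key j)
              refine Finset.sum_le_sum_of_subset_of_nonneg ?_ (fun i _ _ => hM j i)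
              intro i hi
              simp only [Finset.mem_filter, Finset.mem_univ, true_and] at hi ⊢
              exact (not_le.mp hi).le
          _ = n := by simp
    _ = (q + 1) * n := by ring
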